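/- Let α ∈ (0,1], ε ∈ (0,α), L ≥ 1, c ≥ 1, and let P : ℕ → ℝ with P(n) ≥ 1 for all n. Then there exist N ∈ ℕ, K > 0 and ε₁ ∈ (0,1) such that: for every integer n with N ≤ n ≤ 2N, all reals y, z with 0 < |z| ≤ |y|, |y| ≤ ε₁ and |y| ≤ L·2ⁿ·|z|, and all reals a, b, γ, θ with |a − 2ⁿ| ≤ c·|y|, |b − 2^{−n}| ≤ c·|y|, |γ| ≤ P(n)·|y| and |θ| ≤ K·|y|^{α−ε}, one has a ≠ 0 and |γ/a + (b/a)·θ| ≤ K·|z|^{α−ε}. -/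
import Mathlib

set_option maxHeartbeats 800000


/-- Quantitative core of Lemma 2.11: the action of `dφⁿ` propagates the Hölder bound
`|θ(y)| ≤ K |y|^(α-ε)` from `y` to `z = φⁿ(y)`. -/
theorem holder_bound_propagation
    (α ε L c : ℝ) (hα : α ∈ Set.Ioc (0:ℝ) 1) (hε : ε ∈ Set.Ioo 0 α)
    (hL : 1 ≤ L) (hc : 1 ≤ c) (P : ℕ → ℝ) (hP : ∀ n, 1 ≤ P n) :
    ∃ N : ℕ, ∃ K > (0:ℝ), ∃ ε₁ ∈ Set.Ioo (0:ℝ) 1,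
      ∀ n : ℕ, N ≤ n → n ≤ 2 * N →
      ∀ y z a b γ θ : ℝ,
        0 < |z| → |z| ≤ |y| → |y| ≤ ε₁ → |y| ≤ L * 2 ^ n * |z| →
        |a - 2 ^ n| ≤ c * |y| → |b - (2:ℝ) ^ (-(n:ℤ))| ≤ c * |y| →
        |γ| ≤ P n * |y| → |θ| ≤ K * |y| ^ (α - ε) →
        a ≠ 0 ∧ |γ / a + (b / a) * θ| ≤ K * |z| ^ (α - ε) := by
  obtain ⟨hα0, hα1⟩ := hα
  obtain ⟨hε0, hεα⟩ := hε
  have hβ0 : (0:ℝ) < α - ε := by linarith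
  have hβ1 : α - ε ≤ 1 := by linarith
  have hc0 : (0:ℝ) < c := lt_of_lt_of_le one_pos hc
  have hL0 : (0:ℝ) < L := lt_of_lt_of_le one_pos hL
  obtain ⟨N₀, hN₀⟩ := pow_unbounded_of_one_lt (8*L) (by norm_num : (1:ℝ) < 2)
  set N := N₀ + 1 with hNdef
  have h8L : 8 * L ≤ (2:ℝ) ^ N := by
    have h : (2:ℝ) ^ N₀ ≤ 2 ^ N := by
      apply pow_le_pow_right₀ (by norm_num) (by omega)
    linarith
  set M := ∑ i ∈ Finset.range (2*N+1), P i with hMdef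
  have hPnonneg : ∀ i, (0:ℝ) ≤ P i := fun i => le_trans zero_le_one (hP i)
  have hPM : ∀ m : ℕ, m ≤ 2*N → P m ≤ M := by
    intro m hm
    exact Finset.single_le_sum (fun i _ => hPnonneg i) (Finset.mem_range.mpr (by omega))
  have hM1 : (1:ℝ) ≤ M := le_trans (hP 0) (hPM 0 (by omega))
  have hM0 : (0:ℝ) < M := lt_of_lt_of_le one_pos hM1
  refine ⟨N, 4*L*M, by positivity, min (1/2) ((2:ℝ)^(-(2*N:ℤ))/c),
    ⟨lt_min (by norm_num) (by positivity),
     lt_of_le_of_lt (min_le_left _ _) (by norm_num)⟩, ?_⟩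
  intro n hNn hn2N y z a b γ θ hz hzy hyε hyLz ha hb hγ hθ
  set A := (2:ℝ)^n with hAdef
  have hA0 : (0:ℝ) < A := by positivity
  have hA2 : (2:ℝ) ≤ A := by
    have : (2:ℝ)^1 ≤ (2:ℝ)^n := pow_le_pow_right₀ (by norm_num) (by omega)
    simpa using this
  have hA8L : 8 * L ≤ A := by
    have : (2:ℝ)^N ≤ (2:ℝ)^n := pow_le_pow_right₀ (by norm_num) hNn
    linarith
  -- c * |y| ≤ A⁻¹
  have hy2N : |y| ≤ (2:ℝ)^(-(2*N:ℤ))/c := le_trans hyε (min_le_right _ _)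
  have hcy1 : c * |y| ≤ (2:ℝ)^(-(2*N:ℤ)) := by
    rw [le_div_iff₀ hc0] at hy2N; linarith [mul_comm c |y|]
  have hzpow : (2:ℝ)^(-(2*N:ℤ)) ≤ A⁻¹ := by
    have h1 : (2:ℝ)^(-(2*N:ℤ)) = ((2:ℝ)^(2*N))⁻¹ := by
      rw [show (-(2*N:ℤ)) = -((2*N : ℕ):ℤ) by push_cast; ring, zpow_neg, zpow_natCast]
    rw [h1, hAdef]
    exact inv_anti₀ (by positivity) (pow_le_pow_right₀ (by norm_num) hn2N)
  have hcy : c * |y| ≤ A⁻¹ := le_trans hcy1 hzpow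
  have hAinv1 : A⁻¹ ≤ 1 := by
    rw [inv_le_one_iff₀]; right; linarith
  have hAinvA : A⁻¹ * A = 1 := inv_mul_cancel₀ (ne_of_gt hA0)
  -- bounds on a and b
  have ha' : A / 2 ≤ a := by
    rw [abs_le] at ha
    have hcy' : c * |y| ≤ 1 := le_trans hcy hAinv1
    linarith [ha.1]
  have ha0 : (0:ℝ) < a := by linarith
  have hbn : (2:ℝ)^(-(n:ℤ)) = A⁻¹ := by rw [zpow_neg, zpow_natCast]
  have hbB : |b| ≤ 2 * A⁻¹ := by
    have h1 : |b| ≤ |b - A⁻¹| + |A⁻¹| := by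
      calc |b| = |(b - A⁻¹) + A⁻¹| := by ring_nf
      _ ≤ |b - A⁻¹| + |A⁻¹| := abs_add_le _ _
    rw [hbn] at hb
    have h2 : |A⁻¹| = A⁻¹ := abs_of_pos (by positivity)
    linarith
  -- rpow facts
  have hy0 : (0:ℝ) < |y| := lt_of_lt_of_le hz hzy
  have hy1 : |y| ≤ 1 := le_trans hyε (le_trans (min_le_left _ _) (by norm_num))
  set T := |z| ^ (α - ε) with hTdef
  have hT0 : (0:ℝ) < T := Real.rpow_pos_of_pos hz _
  have hyy : |y| ≤ |y| ^ (α - ε) := by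
    calc |y| = |y| ^ (1:ℝ) := (Real.rpow_one _).symm
    _ ≤ |y| ^ (α - ε) := Real.rpow_le_rpow_of_exponent_ge hy0 hy1 hβ1
  have hys : |y| ^ (α - ε) ≤ L * A * T := by
    have h1 : |y| ^ (α - ε) ≤ (L * A * |z|) ^ (α - ε) :=
      Real.rpow_le_rpow (abs_nonneg y) hyLz hβ0.le
    have h2 : (L * A * |z|) ^ (α - ε) = (L * A) ^ (α - ε) * T :=
      Real.mul_rpow (by positivity) (abs_nonneg z)
    have h3 : (L * A) ^ (α - ε) ≤ L * A := by
      calc (L * A) ^ (α - ε) ≤ (L * A) ^ (1:ℝ) :=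
        Real.rpow_le_rpow_of_exponent_le (by nlinarith) hβ1
      _ = L * A := Real.rpow_one _
    calc |y| ^ (α - ε) ≤ (L * A) ^ (α - ε) * T := by rw [← h2]; exact h1
    _ ≤ L * A * T := mul_le_mul_of_nonneg_right h3 hT0.le
  -- main estimate
  refine ⟨ne_of_gt ha0, ?_⟩
  have hrw : γ / a + b / a * θ = (γ + b * θ) / a := by ring
  rw [hrw, abs_div, abs_of_pos ha0, div_le_iff₀ ha0]
  have habs : |γ + b * θ| ≤ |γ| + |b| * |θ| := by
    calc |γ + b * θ| ≤ |γ| + |b * θ| := abs_add_le _ _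
    _ = |γ| + |b| * |θ| := by rw [abs_mul]
  have g1 : |γ| ≤ M * (L * A * T) := by
    calc |γ| ≤ P n * |y| := hγ
    _ ≤ M * |y| := mul_le_mul_of_nonneg_right (hPM n hn2N) (abs_nonneg y)
    _ ≤ M * |y| ^ (α - ε) := mul_le_mul_of_nonneg_left hyy hM0.le
    _ ≤ M * (L * A * T) := mul_le_mul_of_nonneg_left hys hM0.le
  have hθ' : |θ| ≤ 4*L*M * (L * A * T) :=
    hθ.trans (mul_le_mul_of_nonneg_left hys (by positivity))
  have g2 : |b| * |θ| ≤ 8 * L^2 * M * T := by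
    calc |b| * |θ| ≤ (2 * A⁻¹) * (4*L*M * (L * A * T)) :=
      mul_le_mul hbB hθ' (abs_nonneg θ) (by positivity)
    _ = 8 * L^2 * M * T * (A⁻¹ * A) := by ring
    _ = 8 * L^2 * M * T := by rw [hAinvA, mul_one]
  have p1 : (0:ℝ) ≤ (A - 8*L) * (L * M * T) :=
    mul_nonneg (by linarith) (by positivity)
  have p2 : (0:ℝ) ≤ (a - A/2) * (4 * L * M * T) :=
    mul_nonneg (by linarith) (by positivity)
  linarith [habs, g1, g2, p1, p2]
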